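/- Assume p > 0, q > 0 and x₀ + y₀ > 0. Let K⁽⁰⁾ be the block-constant kernel with values (x₀, y₀) and K⁽ℓ⁾ = A K⁽ℓ⁻¹⁾ A for ℓ ≥ 1 (the GCN-GP kernel recursion under the SBM). Then the normalized kernel K⁽ℓ⁾ / ((1/n)·tr(K⁽ℓ⁾)) converges entrywise, as ℓ → ∞, to the n×n all-ones matrix; in particular the limit matrix has rank 1, so GCN-GP suffers complete oversmoothing. -/

import Mathlib

noncomputable section

/-- The m×m all-ones real matrix. -/
def onesJ (m : ℕ) : Matrix (Fin m) (Fin m) ℝ := Matrix.of fun _ _ => 1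

/-- The block-constant kernel with values (x, y). -/
def blockConst (m : ℕ) (x y : ℝ) : Matrix (Fin m ⊕ Fin m) (Fin m ⊕ Fin m) ℝ :=
  Matrix.fromBlocks (x • onesJ m) (y • onesJ m) (y • onesJ m) (x • onesJ m)

/-- The population two-community SBM adjacency matrix. -/
def sbmAdj (m : ℕ) (p q : ℝ) : Matrix (Fin m ⊕ Fin m) (Fin m ⊕ Fin m) ℝ :=
  blockConst m p q

lemma blockConst_mul (m : ℕ) (a b x y : ℝ) :
    blockConst m a b * blockConst m x y
      = blockConst m ((m:ℝ) * (a*x + b*y)) ((m:ℝ) * (a*y + b*x)) := by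
  ext i j
  rcases i with i | i <;> rcases j with j | j <;>
    simp [blockConst, onesJ, Matrix.mul_apply, Fintype.sum_sum_type] <;> ring

lemma blockConst_trace (m : ℕ) (x y : ℝ) :
    Matrix.trace (blockConst m x y) = 2 * m * x := by
  simp [Matrix.trace, blockConst, onesJ, Matrix.diag, Fintype.sum_sum_type]
  ring

/-- Rank collapse in GCN-GP: under the SBM with p, q > 0 and x₀ + y₀ > 0, the
    trace-normalized GCN-GP kernel converges entrywise to the all-ones matrix,
    which has rank 1 (complete oversmoothing). -/
theorem stmt2 (m : ℕ) (hm : 1 ≤ m) (p q x₀ y₀ : ℝ)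
    (hp : 0 < p) (hq : 0 < q) (hxy : 0 < x₀ + y₀)
    (K : ℕ → Matrix (Fin m ⊕ Fin m) (Fin m ⊕ Fin m) ℝ)
    (hK0 : K 0 = blockConst m x₀ y₀)
    (hK : ∀ ℓ, K (ℓ + 1) = sbmAdj m p q * K ℓ * sbmAdj m p q) :
    Filter.Tendsto
        (fun ℓ => ((1 / (2 * (m : ℝ))) * Matrix.trace (K ℓ))⁻¹ • K ℓ)
        Filter.atTop
        (nhds (Matrix.of fun (_ _ : Fin m ⊕ Fin m) => (1 : ℝ)))
    ∧ Matrix.rank (Matrix.of fun (_ _ : Fin m ⊕ Fin m) => (1 : ℝ)) = 1 := by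
  have hm0 : (0:ℝ) < (m:ℝ) := by exact_mod_cast hm
  have hpq : (0:ℝ) < p + q := by linarith
  set S : ℝ := (m:ℝ)^2 * (p+q)^2 with hSdef
  set D : ℝ := (m:ℝ)^2 * (p-q)^2 with hDdef
  set X : ℕ → ℝ := fun ℓ => (S^ℓ * (x₀+y₀) + D^ℓ * (x₀-y₀))/2 with hXdef
  set Y : ℕ → ℝ := fun ℓ => (S^ℓ * (x₀+y₀) - D^ℓ * (x₀-y₀))/2 with hYdef
  set r : ℕ → ℝ := fun ℓ => ((p-q)^2/(p+q)^2)^ℓ * ((x₀-y₀)/(x₀+y₀)) with hrdef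
  set P : ℕ → ℝ := fun ℓ => S^ℓ * (x₀+y₀)/2 with hPdef
  have hS : 0 < S := by positivity
  have hP : ∀ ℓ, 0 < P ℓ := fun ℓ => by
    simp only [hPdef]; positivity
  have hrep : ∀ ℓ, K ℓ = blockConst m (X ℓ) (Y ℓ) := by
    intro ℓ
    induction ℓ with
    | zero =>
      have h1 : X 0 = x₀ := by simp only [hXdef, pow_zero]; ring
      have h2 : Y 0 = y₀ := by simp only [hYdef, pow_zero]; ring
      rw [hK0, h1, h2]
    | succ n ih =>
      rw [hK n, ih, sbmAdj, blockConst_mul, blockConst_mul]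
      rw [show (m:ℝ) * (((m:ℝ) * (p * X n + q * Y n)) * p
            + ((m:ℝ) * (p * Y n + q * X n)) * q) = X (n+1) by
          simp only [hXdef, hYdef, hSdef, hDdef, pow_succ]; ring,
        show (m:ℝ) * (((m:ℝ) * (p * X n + q * Y n)) * q
            + ((m:ℝ) * (p * Y n + q * X n)) * p) = Y (n+1) by
          simp only [hXdef, hYdef, hSdef, hDdef, pow_succ]; ring]
  -- X, Y in terms of P and r
  have hc : S * ((p-q)^2/(p+q)^2) = D := by
    field_simp [hSdef, hDdef]; ring
  have hXr : ∀ ℓ, X ℓ = P ℓ * (1 + r ℓ) := by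
    intro ℓ
    have hD : D^ℓ = S^ℓ * ((p-q)^2/(p+q)^2)^ℓ := by rw [← mul_pow, hc]
    simp only [hXdef, hPdef, hrdef, hD]
    field_simp
  have hYr : ∀ ℓ, Y ℓ = P ℓ * (1 - r ℓ) := by
    intro ℓ
    have hD : D^ℓ = S^ℓ * ((p-q)^2/(p+q)^2)^ℓ := by rw [← mul_pow, hc]
    simp only [hYdef, hPdef, hrdef, hD]
    field_simp
  -- r → 0
  have hc0 : (0:ℝ) ≤ (p-q)^2/(p+q)^2 := by positivity
  have hc1 : (p-q)^2/(p+q)^2 < 1 := by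
    rw [div_lt_one (by positivity)]
    nlinarith
  have hr0 : Filter.Tendsto r Filter.atTop (nhds 0) := by
    have := (tendsto_pow_atTop_nhds_zero_of_lt_one hc0 hc1).mul_const
      ((x₀-y₀)/(x₀+y₀))
    simpa using this
  have hev : ∀ᶠ ℓ in Filter.atTop, 0 < 1 + r ℓ := by
    have := hr0.eventually (eventually_gt_nhds (show (-1:ℝ) < 0 by norm_num))
    filter_upwards [this] with ℓ h
    linarith
  -- normalization scalar
  have hscal : ∀ ℓ, ((1 / (2 * (m : ℝ))) * Matrix.trace (K ℓ))⁻¹ = (X ℓ)⁻¹ := by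
    intro ℓ
    rw [hrep ℓ, blockConst_trace]
    congr 1
    field_simp
  constructor
  · refine tendsto_pi_nhds.2 fun i => tendsto_pi_nhds.2 fun j => ?_
    have hgoal1 : Filter.Tendsto (fun ℓ => (X ℓ)⁻¹ * X ℓ) Filter.atTop (nhds 1) := by
      refine Filter.Tendsto.congr' ?_ tendsto_const_nhds
      filter_upwards [hev] with ℓ h
      have hX : X ℓ ≠ 0 := by
        rw [hXr ℓ]; exact ne_of_gt (mul_pos (hP ℓ) h)
      rw [inv_mul_cancel₀ hX]
    have hgoal2 : Filter.Tendsto (fun ℓ => (X ℓ)⁻¹ * Y ℓ) Filter.atTop (nhds 1) := by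
      have h1 : Filter.Tendsto (fun ℓ => 1 - r ℓ) Filter.atTop (nhds (1 - 0)) :=
        (tendsto_const_nhds (x := (1:ℝ))).sub hr0
      have h2 : Filter.Tendsto (fun ℓ => 1 + r ℓ) Filter.atTop (nhds (1 + 0)) :=
        (tendsto_const_nhds (x := (1:ℝ))).add hr0
      have hg : Filter.Tendsto (fun ℓ => (1 - r ℓ)/(1 + r ℓ)) Filter.atTop
          (nhds 1) := by
        have := h1.div h2 (by norm_num : (1:ℝ) + 0 ≠ 0)
        rw [show ((1:ℝ) - 0) / (1 + 0) = 1 by norm_num] at this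
        exact this
      refine Filter.Tendsto.congr' ?_ hg
      filter_upwards [hev] with ℓ h
      rw [hXr ℓ, hYr ℓ]
      have hPne : P ℓ ≠ 0 := ne_of_gt (hP ℓ)
      have h1 : (1:ℝ) + r ℓ ≠ 0 := ne_of_gt h
      field_simp
    rcases i with i | i <;> rcases j with j | j <;>
      · simp only [Matrix.smul_apply, Matrix.of_apply, smul_eq_mul, hscal]
        have hentry : ∀ ℓ : ℕ, ((X ℓ)⁻¹ • K ℓ) = (X ℓ)⁻¹ • blockConst m (X ℓ) (Y ℓ) :=
          fun ℓ => by rw [hrep ℓ]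
        simp only [hrep, blockConst, onesJ]
        simpa [Matrix.fromBlocks, smul_eq_mul] using (by
          first
          | exact hgoal1
          | exact hgoal2)
  · -- rank of all-ones matrix
    haveI hne : Nonempty (Fin m ⊕ Fin m) := ⟨Sum.inl ⟨0, hm⟩⟩
    have hA : Matrix.col (Matrix.of fun (_ _ : Fin m ⊕ Fin m) => (1:ℝ))
        = fun _ => (fun (_ : Fin m ⊕ Fin m) => (1:ℝ)) := rfl
    have hv : (fun (_ : Fin m ⊕ Fin m) => (1:ℝ)) ≠ 0 := by
      intro h
      have := congrFun h (Classical.arbitrary _)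
      simp at this
    rw [Matrix.rank_eq_finrank_span_cols]
    rw [hA, Set.range_const,
      finrank_span_singleton hv]
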